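/- Reduction of language universality to output simulation: let F' be any filter over alphabet Σ in which every state has the single output c0, and let F be the tracing-deterministic filter with a single initial state colored c0 carrying a self-loop bearing every symbol of Σ (so L(F) = Σ*). Then F' output simulates F if and only if L(F') = Σ*. -/

import Mathlib

/-- A procrustean filter with state type `V`, observation alphabet `Y`, and output set `C`:
initial states `V0`, transition labeling `tr`, and nonempty output sets `out`. -/
structure PFilter (V Y C : Type) where
  V0 : Set V
  tr : V → V → Set Y
  out : V → Set C
  out_ne : ∀ v, (out v).Nonempty

namespace PFilter

variable {V V' V'' Y C : Type}

/-- One step of tracing: states reachable from some state of `S` along a `y`-labeled edge. -/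
def step (F : PFilter V Y C) (S : Set V) (y : Y) : Set V :=
  {w | ∃ v ∈ S, y ∈ F.tr v w}

/-- `V_F(s)`: the set of states reached by the string `s` from some initial state. -/
def reached (F : PFilter V Y C) (s : List Y) : Set V :=
  s.foldl F.step F.V0

/-- The interaction language `L(F)`. -/
def lang (F : PFilter V Y C) : Set (List Y) :=
  {s | (F.reached s).Nonempty}

/-- `C_F(s)`: the set of outputs produced for a string `s`. -/
def outputs (F : PFilter V Y C) (s : List Y) : Set C :=
  ⋃ w ∈ F.reached s, F.out w

/-- `F'` output simulates `F`: language inclusion and output compatibility. -/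
def OutputSimulates (F' : PFilter V' Y C) (F : PFilter V Y C) : Prop :=
  F.lang ⊆ F'.lang ∧ ∀ s ∈ F.lang, F'.outputs s ⊆ F.outputs s

/-- Tracing-deterministic: one initial state and disjoint labels on departing edges. -/
def TracingDet (F : PFilter V Y C) : Prop :=
  (∃ v0 : V, F.V0 = {v0}) ∧
  ∀ v1 v2 v3 : V, v2 ≠ v3 → F.tr v1 v2 ∩ F.tr v1 v3 = ∅

/-- Vertex single-output: every state has exactly one output. -/
def VertexSingle (F : PFilter V Y C) : Prop :=
  ∀ v : V, ∃ a : C, F.out v = {a}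

/-- String single-output: every string in the language has exactly one output. -/
def StringSingle (F : PFilter V Y C) : Prop :=
  ∀ s ∈ F.lang, ∃ a : C, F.outputs s = {a}

/-- The tensor product of two filters (outputs taken from the first component;
only the transition structure matters for reachability statements). -/
def tensor (F : PFilter V Y C) (F' : PFilter V' Y C) : PFilter (V × V') Y C where
  V0 := F.V0 ×ˢ F'.V0
  tr p q := F.tr p.1 q.1 ∩ F'.tr p.2 q.2
  out p := F.out p.1
  out_ne p := F.out_ne p.1

end PFilter

/-- Reduction of language universality to output simulation: if every state of `F'`
has the single output `c0`, and `F` is the one-state tracing-deterministic filter whose single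
state is colored `c0` and carries a self-loop on every symbol (so `L(F) = Σ*`), then `F'` output
simulates `F` iff `L(F')` is all of `Σ*`. -/
theorem outputSimulates_universal_iff {V' Y C : Type}
    (F' : PFilter V' Y C) (c0 : C)
    (hout : ∀ v : V', F'.out v = {c0}) :
    F'.OutputSimulates
      (⟨{PUnit.unit}, fun _ _ => (Set.univ : Set Y), fun _ => {c0},
        fun _ => ⟨c0, rfl⟩⟩ : PFilter PUnit Y C)
      ↔ F'.lang = Set.univ := by
  set F : PFilter PUnit Y C :=
    ⟨{PUnit.unit}, fun _ _ => (Set.univ : Set Y), fun _ => {c0}, fun _ => ⟨c0, rfl⟩⟩ with hF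
  have hstep : ∀ y : Y, F.step {PUnit.unit} y = {PUnit.unit} := by
    intro y
    ext w
    simp [PFilter.step, hF]
  have hreach : ∀ s : List Y, F.reached s = {PUnit.unit} := by
    intro s
    have : ∀ s : List Y, s.foldl F.step {PUnit.unit} = {PUnit.unit} := by
      intro s
      induction s with
      | nil => rfl
      | cons y t ih => simp [List.foldl, hstep, ih]
    exact this s
  have hlangF : F.lang = Set.univ := by
    ext s
    simp [PFilter.lang, hreach]
  have houtF : ∀ s : List Y, F.outputs s = {c0} := by
    intro s
    simp only [PFilter.outputs, hreach]
    simp [hF]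
  constructor
  · rintro ⟨h1, _⟩
    apply Set.eq_univ_of_univ_subset
    calc Set.univ = F.lang := hlangF.symm
      _ ⊆ F'.lang := h1
  · intro h
    constructor
    · rw [h]; exact Set.subset_univ _
    · intro s _ x hx
      rw [houtF]
      simp only [PFilter.outputs, Set.mem_iUnion] at hx
      obtain ⟨w, _, hw⟩ := hx
      rw [hout w] at hw
      exact hw
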